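/- Let ν belong to the class K, with constants C > 0 and δ > 0 such that |ν''(t)| ≤ C e^{-δ t} for all t ≥ 0, let λ ∈ ℂ with Re λ ≥ 0, and let R : [0,∞) → ℂ be continuous with ∫_0^∞ |R(y)|² e^{-δ y} dy < ∞. Then the iterated integral ∫_0^∞ ν''(s) ∫_0^s e^{-λ(s-y)} R(y) dy ds converges absolutely and its modulus is at most (C/δ^{3/2}) (∫_0^∞ |R(y)|² e^{-δ y} dy)^{1/2}. -/

import Mathlib

open MeasureTheory Filter

lemma my_cs (μ : Measure ℝ) (f g : ℝ → ℝ)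
    (hf0 : ∀ x, 0 ≤ f x) (hg0 : ∀ x, 0 ≤ g x)
    (hfm : AEStronglyMeasurable f μ) (hgm : AEStronglyMeasurable g μ)
    (hf2 : Integrable (fun x => f x ^ 2) μ) (hg2 : Integrable (fun x => g x ^ 2) μ) :
    ∫ x, f x * g x ∂μ ≤ Real.sqrt (∫ x, f x ^ 2 ∂μ) * Real.sqrt (∫ x, g x ^ 2 ∂μ) := by
  have hpq : Real.HolderConjugate 2 2 := Real.HolderConjugate.two_two
  have h2 : (ENNReal.ofReal (2:ℝ)) = 2 := by
    simp [ENNReal.ofReal_ofNat]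
  have hfL : MemLp f (ENNReal.ofReal (2:ℝ)) μ := by
    rw [h2]; exact (memLp_two_iff_integrable_sq hfm).2 hf2
  have hgL : MemLp g (ENNReal.ofReal (2:ℝ)) μ := by
    rw [h2]; exact (memLp_two_iff_integrable_sq hgm).2 hg2
  have := MeasureTheory.integral_mul_le_Lp_mul_Lq_of_nonneg hpq
    (Filter.Eventually.of_forall hf0) (Filter.Eventually.of_forall hg0) hfL hgL
  calc ∫ x, f x * g x ∂μ ≤ (∫ x, f x ^ (2:ℝ) ∂μ) ^ (1/2:ℝ) * (∫ x, g x ^ (2:ℝ) ∂μ) ^ (1/2:ℝ) := this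
    _ = Real.sqrt (∫ x, f x ^ 2 ∂μ) * Real.sqrt (∫ x, g x ^ 2 ∂μ) := by
        rw [← Real.sqrt_eq_rpow, ← Real.sqrt_eq_rpow]
        congr 1 <;> · congr 1; apply integral_congr_ae; filter_upwards with x; exact Real.rpow_two _

lemma exp_ioc_int (c : ℝ) (hc : c ≠ 0) (s : ℝ) (hs : 0 ≤ s) :
    ∫ y in Set.Ioc (0:ℝ) s, Real.exp (c*y) = (Real.exp (c*s) - 1)/c := by
  rw [← intervalIntegral.integral_of_le hs]
  have hd : ∀ y ∈ Set.uIcc (0:ℝ) s, HasDerivAt (fun t => Real.exp (c*t)/c) (Real.exp (c*y)) y := by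
    intro y _
    have h1 : HasDerivAt (fun t => Real.exp (c*t)) (Real.exp (c*y) * c) y := by
      have : HasDerivAt (fun t => Real.exp (c*t)) (Real.exp (c*y) * (c*1)) y := (Real.hasDerivAt_exp (c*y)).comp y ((hasDerivAt_id y).const_mul c)
      simpa [mul_comm] using this
    have := h1.div_const c
    simpa [mul_div_assoc, mul_div_cancel_right₀ _ hc] using this
  rw [intervalIntegral.integral_eq_sub_of_hasDerivAt hd
    ((Real.continuous_exp.comp (continuous_const.mul continuous_id)).intervalIntegrable 0 s)]
  rw [mul_zero, Real.exp_zero, sub_div]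

theorem stmt10 (ν : ℝ → ℝ) (C δ : ℝ) (hC : 0 < C) (hδ : 0 < δ)
    (hsmooth : ContDiff ℝ 2 ν)
    (hlim : Tendsto (deriv ν) atTop (nhds 0))
    (hbound : ∀ t : ℝ, 0 ≤ t → |deriv (deriv ν) t| ≤ C * Real.exp (-δ * t))
    (z : ℂ) (hz : 0 ≤ z.re) (R : ℝ → ℂ) (hR : Continuous R)
    (hRint : IntegrableOn (fun y : ℝ => ‖R y‖ ^ 2 * Real.exp (-δ * y)) (Set.Ioi 0)) :
    IntegrableOn (fun s : ℝ =>
        ((deriv (deriv ν) s : ℝ) : ℂ) * ∫ y in (0:ℝ)..s, Complex.exp (-z * (s - y)) * R y)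
      (Set.Ioi 0) ∧
    ‖∫ s in Set.Ioi (0:ℝ),
        ((deriv (deriv ν) s : ℝ) : ℂ) * ∫ y in (0:ℝ)..s, Complex.exp (-z * (s - y)) * R y‖
      ≤ (C / δ ^ ((3:ℝ)/2)) *
        Real.sqrt (∫ y in Set.Ioi (0:ℝ), ‖R y‖ ^ 2 * Real.exp (-δ * y)) := by
  -- notation
  set M : ℝ := ∫ y in Set.Ioi (0:ℝ), ‖R y‖ ^ 2 * Real.exp (-δ * y) with hMdef
  have hM0 : 0 ≤ M := by
    apply integral_nonneg; intro y; positivity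
  set F : ℝ → ℂ := fun s =>
    ((deriv (deriv ν) s : ℝ) : ℂ) * ∫ y in (0:ℝ)..s, Complex.exp (-z * (s - y)) * R y with hFdef
  -- continuity of ν''
  have hν2cont : Continuous (deriv (deriv ν)) := by
    have h1 : ContDiff ℝ 1 (deriv ν) := by
      have : (2 : WithTop ℕ∞) = 1 + 1 := by norm_num
      rw [this] at hsmooth
      exact (contDiff_succ_iff_deriv.mp hsmooth).2.2
    exact h1.continuous_deriv le_rfl
  -- primitive of norm of R
  set h : ℝ → ℝ := fun s => ∫ y in (0:ℝ)..s, ‖R y‖ with hhdef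
  have hh_deriv : ∀ s : ℝ, HasDerivAt h (‖R s‖) s := by
    intro s
    exact intervalIntegral.integral_hasDerivAt_right
      ((hR.norm).intervalIntegrable 0 s)
      (hR.norm.stronglyMeasurableAtFilter _ _)
      (hR.norm.continuousAt)
  have hh_cont : Continuous h := by
    have : Differentiable ℝ h := fun s => (hh_deriv s).differentiableAt
    exact this.continuous
  have hh0 : ∀ s : ℝ, 0 ≤ s → 0 ≤ h s := by
    intro s hs
    apply intervalIntegral.integral_nonneg hs
    intro x _; exact norm_nonneg _
  -- continuity of F
  have hF_cont : Continuous F := by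
    have heq : ∀ s : ℝ, (∫ y in (0:ℝ)..s, Complex.exp (-z * (s - y)) * R y)
        = Complex.exp (-z * s) * ∫ y in (0:ℝ)..s, Complex.exp (z * y) * R y := by
      intro s
      rw [← intervalIntegral.integral_const_mul]
      apply intervalIntegral.integral_congr
      intro y _
      simp only []
      rw [show (-z*(↑s-↑y):ℂ) = -z*↑s + z*↑y by ring, Complex.exp_add, mul_assoc]
    have hP_deriv : ∀ s : ℝ, HasDerivAt (fun u => ∫ y in (0:ℝ)..u, Complex.exp (z * y) * R y)
        (Complex.exp (z * s) * R s) s := by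
      intro s
      have hc : Continuous fun y : ℝ => Complex.exp (z * y) * R y := by
        exact (Complex.continuous_exp.comp (continuous_const.mul Complex.continuous_ofReal)).mul hR
      exact intervalIntegral.integral_hasDerivAt_right (hc.intervalIntegrable 0 s)
        (hc.stronglyMeasurableAtFilter _ _) hc.continuousAt
    have hP_cont : Continuous (fun u => ∫ y in (0:ℝ)..u, Complex.exp (z * y) * R y) := by
      have hd : Differentiable ℝ (fun u => ∫ y in (0:ℝ)..u, Complex.exp (z * y) * R y) :=
        fun s => (hP_deriv s).differentiableAt
      exact hd.continuous
    have : F = fun s => ((deriv (deriv ν) s : ℝ) : ℂ) *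
        (Complex.exp (-z * s) * ∫ y in (0:ℝ)..s, Complex.exp (z * y) * R y) := by
      funext s; rw [hFdef]; simp only [heq s]
    rw [this]
    exact (Complex.continuous_ofReal.comp hν2cont).mul
      ((Complex.continuous_exp.comp (continuous_const.mul Complex.continuous_ofReal)).mul hP_cont)
  -- bound on inner integral
  have hinner_le : ∀ s : ℝ, 0 ≤ s →
      ‖∫ y in (0:ℝ)..s, Complex.exp (-z * (s - y)) * R y‖ ≤ h s := by
    intro s hs
    refine le_trans (intervalIntegral.norm_integral_le_integral_norm hs) ?_
    apply intervalIntegral.integral_mono_on hs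
    · exact ((Complex.continuous_exp.comp ((continuous_const.mul
        (continuous_const.sub Complex.continuous_ofReal)))).mul hR).norm.intervalIntegrable 0 s
    · exact hR.norm.intervalIntegrable 0 s
    · intro y hy
      rw [norm_mul]
      have h1 : ‖Complex.exp (-z * (s - y))‖ ≤ 1 := by
        rw [Complex.norm_exp]
        apply Real.exp_le_one_iff.mpr
        simp only [Complex.neg_re, Complex.mul_re, Complex.sub_re, Complex.ofReal_re,
          Complex.sub_im, Complex.ofReal_im]
        have : (s - y : ℂ).re = s - y := by simp
        nlinarith [hy.1, hy.2, mul_nonneg hz (sub_nonneg.mpr hy.2),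
          mul_self_nonneg (z.im * (s-y:ℂ).im)]
      calc ‖Complex.exp (-z * (s - y))‖ * ‖R y‖ ≤ 1 * ‖R y‖ :=
        mul_le_mul_of_nonneg_right h1 (norm_nonneg _)
        _ = ‖R y‖ := one_mul _
  -- Cauchy-Schwarz estimate for weighted integrals of ‖R‖ over Ioc 0 s
  have hIoc_le_M : ∀ s : ℝ, (∫ y in Set.Ioc (0:ℝ) s, ‖R y‖^2 * Real.exp (-δ*y)) ≤ M := by
    intro s
    apply setIntegral_mono_set hRint
    · filter_upwards with y; positivity
    · exact HasSubset.Subset.eventuallyLE Set.Ioc_subset_Ioi_self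
  have hfg : ∀ y : ℝ, (‖R y‖ * Real.exp (-(δ/2)*y))^2 = ‖R y‖^2 * Real.exp (-δ*y) := by
    intro y
    rw [mul_pow]
    congr 1
    rw [sq, ← Real.exp_add]
    congr 1
    ring
  set f : ℝ → ℝ := fun y => ‖R y‖ * Real.exp (-(δ/2)*y) with hfdef
  have hf_cont : Continuous f :=
    hR.norm.mul (Real.continuous_exp.comp (continuous_const.mul continuous_id))
  have hf0 : ∀ y, 0 ≤ f y := fun y => mul_nonneg (norm_nonneg _) (Real.exp_pos _).le
  have hf2_le : ∀ s : ℝ, (∫ y in Set.Ioc (0:ℝ) s, f y ^ 2) ≤ M := by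
    intro s
    calc (∫ y in Set.Ioc (0:ℝ) s, f y ^ 2)
        = ∫ y in Set.Ioc (0:ℝ) s, ‖R y‖^2 * Real.exp (-δ*y) := by
          apply integral_congr_ae; filter_upwards with y; exact hfg y
      _ ≤ M := hIoc_le_M s
  -- generic CS application: ∫ f·g over Ioc 0 s ≤ √M √(∫ g²)
  have hcs_gen : ∀ (s : ℝ) (g : ℝ → ℝ), Continuous g → (∀ y, 0 ≤ g y) →
      (∫ y in Set.Ioc (0:ℝ) s, f y * g y) ≤
        Real.sqrt M * Real.sqrt (∫ y in Set.Ioc (0:ℝ) s, g y ^ 2) := by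
    intro s g hgc hg0
    have := my_cs (volume.restrict (Set.Ioc (0:ℝ) s)) f g hf0 hg0
      hf_cont.aestronglyMeasurable.restrict hgc.aestronglyMeasurable.restrict
      ((hf_cont.pow 2).integrableOn_Ioc) ((hgc.pow 2).integrableOn_Ioc)
    refine this.trans ?_
    gcongr
    exact hf2_le s
  -- Estimate (A): h s ≤ √M · e^{δs/2}/√δ for s ≥ 0
  have hA : ∀ s : ℝ, 0 ≤ s → h s ≤ Real.sqrt M * (Real.exp ((δ/2)*s) / Real.sqrt δ) := by
    intro s hs
    have h1 : h s = ∫ y in Set.Ioc (0:ℝ) s, f y * Real.exp ((δ/2)*y) := by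
      rw [hhdef]
      simp only []
      rw [intervalIntegral.integral_of_le hs]
      apply integral_congr_ae; filter_upwards with y
      rw [hfdef]
      simp only []
      rw [mul_assoc, ← Real.exp_add]
      rw [show -(δ/2)*y + (δ/2)*y = 0 by ring, Real.exp_zero, mul_one]
    rw [h1]
    refine (hcs_gen s (fun y => Real.exp ((δ/2)*y)) (by fun_prop)
      (fun y => (Real.exp_pos _).le)).trans ?_
    gcongr
    have h2 : (∫ y in Set.Ioc (0:ℝ) s, Real.exp ((δ/2)*y) ^ 2) = (Real.exp (δ*s) - 1)/δ := by
      have : ∀ y : ℝ, Real.exp ((δ/2)*y) ^ 2 = Real.exp (δ*y) := by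
        intro y; rw [sq, ← Real.exp_add]; congr 1; ring
      calc (∫ y in Set.Ioc (0:ℝ) s, Real.exp ((δ/2)*y) ^ 2)
          = ∫ y in Set.Ioc (0:ℝ) s, Real.exp (δ*y) := by
            apply integral_congr_ae; filter_upwards with y; exact this y
        _ = (Real.exp (δ*s) - 1)/δ := exp_ioc_int δ hδ.ne' s hs
    rw [h2]
    have h3 : (Real.exp (δ*s) - 1)/δ ≤ Real.exp (δ*s)/δ := by
      gcongr
      linarith [Real.exp_pos (δ*s)]
    refine (Real.sqrt_le_sqrt h3).trans ?_
    rw [Real.sqrt_div (Real.exp_pos _).le, ← Real.exp_half]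
    apply le_of_eq
    congr 2
    ring
  -- majorant
  set K : ℝ := C * (Real.sqrt M / Real.sqrt δ) with hKdef
  have hK0 : 0 ≤ K := by positivity
  have hGle : ∀ s : ℝ, 0 ≤ s → C * (Real.exp (-δ*s) * h s) ≤ K * Real.exp (-(δ/2)*s) := by
    intro s hs
    have := hA s hs
    have he : Real.exp (-δ*s) * Real.exp ((δ/2)*s) = Real.exp (-(δ/2)*s) := by
      rw [← Real.exp_add]; congr 1; ring
    have hcalc : C * (Real.exp (-δ*s) * (Real.sqrt M * (Real.exp ((δ/2)*s) / Real.sqrt δ)))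
        = K * Real.exp (-(δ/2)*s) := by
      rw [hKdef, ← he]; ring
    calc C * (Real.exp (-δ*s) * h s)
        ≤ C * (Real.exp (-δ*s) * (Real.sqrt M * (Real.exp ((δ/2)*s) / Real.sqrt δ))) := by
          gcongr
      _ = K * Real.exp (-(δ/2)*s) := hcalc
  have hmaj : IntegrableOn (fun s : ℝ => K * Real.exp (-(δ/2)*s)) (Set.Ioi 0) :=
    (exp_neg_integrableOn_Ioi 0 (half_pos hδ)).const_mul K
  have hFG : ∀ s ∈ Set.Ioi (0:ℝ), ‖F s‖ ≤ C * (Real.exp (-δ*s) * h s) := by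
    intro s hs
    have hs' : (0:ℝ) ≤ s := le_of_lt hs
    rw [hFdef]
    simp only [norm_mul, Complex.norm_real]
    rw [← mul_assoc]
    calc ‖deriv (deriv ν) s‖ * ‖∫ y in (0:ℝ)..s, Complex.exp (-z * (s - y)) * R y‖
        ≤ (C * Real.exp (-δ*s)) * h s := by
          apply mul_le_mul (hbound s hs') (hinner_le s hs') (norm_nonneg _)
          positivity
      _ = C * Real.exp (-δ*s) * h s := rfl
  have hFle : ∀ s ∈ Set.Ioi (0:ℝ), ‖F s‖ ≤ K * Real.exp (-(δ/2)*s) := by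
    intro s hs
    exact (hFG s hs).trans (hGle s (le_of_lt hs))
  have hFint : IntegrableOn F (Set.Ioi 0) := by
    apply Integrable.mono' hmaj hF_cont.aestronglyMeasurable.restrict
    rw [ae_restrict_iff' measurableSet_Ioi]
    exact Filter.Eventually.of_forall hFle
  refine ⟨hFint, ?_⟩
  -- integrability of the real majorant G
  set G : ℝ → ℝ := fun s => C * (Real.exp (-δ*s) * h s) with hGdef
  have hG_cont : Continuous G := by
    apply continuous_const.mul
    exact (Real.continuous_exp.comp (continuous_const.mul continuous_id)).mul hh_cont
  have hGint : IntegrableOn G (Set.Ioi 0) := by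
    apply Integrable.mono' hmaj hG_cont.aestronglyMeasurable.restrict
    rw [ae_restrict_iff' measurableSet_Ioi]
    filter_upwards with s hs
    have h0 : 0 ≤ h s := hh0 s (le_of_lt hs)
    rw [Real.norm_of_nonneg (by positivity)]
    exact hGle s (le_of_lt hs)
  -- power identity
  have hsδ : Real.sqrt δ ≠ 0 := by positivity
  have hpow : δ ^ ((3:ℝ)/2) = δ * Real.sqrt δ := by
    rw [show (3:ℝ)/2 = 1 + 1/2 by norm_num, Real.rpow_add hδ, Real.rpow_one,
      ← Real.sqrt_eq_rpow]
  -- bound on the integral of G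
  have hG_bound : (∫ s in Set.Ioi (0:ℝ), G s) ≤ (C / δ ^ ((3:ℝ)/2)) * Real.sqrt M := by
    have ht := intervalIntegral_tendsto_integral_Ioi 0 hGint tendsto_id
    apply le_of_tendsto ht
    filter_upwards [eventually_ge_atTop (0:ℝ)] with T hT
    show (∫ s in (0:ℝ)..(id T), G s) ≤ _
    simp only [id]
    -- IBP
    have hu : ∀ s : ℝ, HasDerivAt (fun t => Real.exp (-δ*t) * h t)
        (Real.exp (-δ*s)*‖R s‖ - δ*(Real.exp (-δ*s)*h s)) s := by
      intro s
      have h1 : HasDerivAt (fun t : ℝ => Real.exp (-δ*t)) (Real.exp (-δ*s) * (-δ)) s := by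
        have : HasDerivAt (fun t : ℝ => Real.exp (-δ*t)) (Real.exp (-δ*s) * (-δ*1)) s := (Real.hasDerivAt_exp (-δ*s)).comp s ((hasDerivAt_id s).const_mul (-δ))
        convert this using 1
        ring
      have : HasDerivAt (fun t => Real.exp (-δ*t) * h t) (Real.exp (-δ*s) * (-δ) * h s + Real.exp (-δ*s) * ‖R s‖) s := h1.mul (hh_deriv s)
      convert this using 1
      ring
    have hcont1 : Continuous (fun s : ℝ => Real.exp (-δ*s)*‖R s‖) := by fun_prop
    have hcont2 : Continuous (fun s : ℝ => δ*(Real.exp (-δ*s)*h s)) := by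
      exact continuous_const.mul
        ((Real.continuous_exp.comp (continuous_const.mul continuous_id)).mul hh_cont)
    have hint1 : IntervalIntegrable (fun s : ℝ => Real.exp (-δ*s)*‖R s‖) volume 0 T :=
      hcont1.intervalIntegrable 0 T
    have hint2 : IntervalIntegrable (fun s : ℝ => δ*(Real.exp (-δ*s)*h s)) volume 0 T :=
      hcont2.intervalIntegrable 0 T
    have key : (∫ s in (0:ℝ)..T, (Real.exp (-δ*s)*‖R s‖ - δ*(Real.exp (-δ*s)*h s)))
        = Real.exp (-δ*T)*h T - Real.exp (-δ*0)*h 0 :=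
      intervalIntegral.integral_eq_sub_of_hasDerivAt (fun s _ => hu s) (hint1.sub hint2)
    rw [intervalIntegral.integral_sub hint1 hint2] at key
    have hh00 : h 0 = 0 := intervalIntegral.integral_same
    have hpos : 0 ≤ Real.exp (-δ*T) * h T := mul_nonneg (Real.exp_pos _).le (hh0 T hT)
    have hIle : (∫ s in (0:ℝ)..T, δ*(Real.exp (-δ*s)*h s))
        ≤ ∫ s in (0:ℝ)..T, Real.exp (-δ*s)*‖R s‖ := by
      rw [hh00, mul_zero, sub_zero] at key
      linarith
    rw [intervalIntegral.integral_const_mul] at hIle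
    -- Cauchy-Schwarz for J
    have hJ : (∫ s in (0:ℝ)..T, Real.exp (-δ*s)*‖R s‖)
        ≤ Real.sqrt M * Real.sqrt (1/δ) := by
      have heq : (∫ s in (0:ℝ)..T, Real.exp (-δ*s)*‖R s‖)
          = ∫ y in Set.Ioc (0:ℝ) T, f y * Real.exp (-(δ/2)*y) := by
        rw [intervalIntegral.integral_of_le hT]
        apply integral_congr_ae; filter_upwards with y
        rw [hfdef]
        simp only []
        rw [mul_assoc, ← Real.exp_add]
        rw [show -(δ/2)*y + -(δ/2)*y = -δ*y by ring]
        ring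
      rw [heq]
      refine (hcs_gen T (fun y => Real.exp (-(δ/2)*y)) (by fun_prop)
        (fun y => (Real.exp_pos _).le)).trans ?_
      gcongr
      have h2 : (∫ y in Set.Ioc (0:ℝ) T, Real.exp (-(δ/2)*y) ^ 2)
          = (Real.exp (-δ*T) - 1)/(-δ) := by
        calc (∫ y in Set.Ioc (0:ℝ) T, Real.exp (-(δ/2)*y) ^ 2)
            = ∫ y in Set.Ioc (0:ℝ) T, Real.exp (-δ*y) := by
              apply integral_congr_ae; filter_upwards with y
              rw [sq, ← Real.exp_add]; congr 1; ring
          _ = (Real.exp (-δ*T) - 1)/(-δ) := exp_ioc_int (-δ) (by linarith) T hT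
      rw [h2, show (Real.exp (-δ*T) - 1)/(-δ) = (1 - Real.exp (-δ*T))/δ by ring]
      gcongr
      linarith [Real.exp_pos (-δ*T)]
    -- combine
    have hIle2 : (∫ s in (0:ℝ)..T, Real.exp (-δ*s)*h s)
        ≤ (Real.sqrt M * Real.sqrt (1/δ))/δ := by
      rw [le_div_iff₀ hδ]
      calc (∫ s in (0:ℝ)..T, Real.exp (-δ*s)*h s) * δ
          = δ * ∫ s in (0:ℝ)..T, Real.exp (-δ*s)*h s := by ring
        _ ≤ ∫ s in (0:ℝ)..T, Real.exp (-δ*s)*‖R s‖ := hIle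
        _ ≤ Real.sqrt M * Real.sqrt (1/δ) := hJ
    have hGT : (∫ s in (0:ℝ)..T, G s) = C * ∫ s in (0:ℝ)..T, Real.exp (-δ*s)*h s := by
      rw [hGdef, intervalIntegral.integral_const_mul]
    rw [hGT]
    calc C * (∫ s in (0:ℝ)..T, Real.exp (-δ*s)*h s)
        ≤ C * ((Real.sqrt M * Real.sqrt (1/δ))/δ) := by gcongr
      _ = (C / δ ^ ((3:ℝ)/2)) * Real.sqrt M := by
          rw [hpow, one_div, Real.sqrt_inv]
          field_simp
  -- conclude
  calc ‖∫ s in Set.Ioi (0:ℝ), F s‖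
      ≤ ∫ s in Set.Ioi (0:ℝ), ‖F s‖ := norm_integral_le_integral_norm _
    _ ≤ ∫ s in Set.Ioi (0:ℝ), G s := by
        apply setIntegral_mono_on hFint.norm hGint measurableSet_Ioi
        exact hFG
    _ ≤ (C / δ ^ ((3:ℝ)/2)) * Real.sqrt M := hG_bound
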